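/- The countable concept class 𝒞 = ⋃_{n≥1} 𝒞_n shatters every finite subset of the open interval (0,1): for every finite set F ⊆ (0,1) and every subset G ⊆ F there exist n ≥ 1 and C ∈ 𝒞_n with C ∩ F = G. -/

import Mathlib

/-- `IntClass n`: unions of fewer than `√n` closed intervals `[i/n, (i+1)/n]`,
`0 ≤ i ≤ n - 1` (intervals of order `n`), including the empty union. -/
def IntClass (n : ℕ) : Set (Set ℝ) :=
  {C | ∃ s : Finset ℕ, s ⊆ Finset.range n ∧ (s.card : ℝ) < Real.sqrt n ∧
    C = ⋃ i ∈ s, Set.Icc ((i : ℝ) / n) (((i : ℝ) + 1) / n)}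

/-- the countable class `𝒞 = ⋃_{n ≥ 1} 𝒞ₙ` shatters every finite
subset of `(0, 1)`: for every finite `F ⊆ (0,1)` and every `G ⊆ F` there are `n ≥ 1` and
`C ∈ 𝒞ₙ` with `C ∩ F = G`. -/
theorem stmt16 (F : Finset ℝ) (hF : (F : Set ℝ) ⊆ Set.Ioo (0 : ℝ) 1)
    (G : Finset ℝ) (hG : G ⊆ F) :
    ∃ n : ℕ, 1 ≤ n ∧ ∃ C ∈ IntClass n, C ∩ (F : Set ℝ) = (G : Set ℝ) := by
  -- pairwise separation
  obtain ⟨δ, hδ0, hδ⟩ : ∃ δ > (0:ℝ), ∀ x ∈ F, ∀ y ∈ F, x ≠ y → δ ≤ |x - y| := by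
    by_cases hT : ((F ×ˢ F).filter (fun p => p.1 ≠ p.2)).Nonempty
    · refine ⟨((F ×ˢ F).filter (fun p => p.1 ≠ p.2)).inf' hT (fun p => |p.1 - p.2|),
        ?_, ?_⟩
      · rw [gt_iff_lt, Finset.lt_inf'_iff]
        intro p hp
        rw [Finset.mem_filter] at hp
        exact abs_pos.mpr (sub_ne_zero.mpr hp.2)
      · intro x hx y hy hxy
        have hm : (x, y) ∈ (F ×ˢ F).filter (fun p => p.1 ≠ p.2) := by
          simp only [Finset.mem_filter, Finset.mem_product]
          exact ⟨⟨hx, hy⟩, hxy⟩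
        exact Finset.inf'_le (fun p => |p.1 - p.2|) hm
    · refine ⟨1, one_pos, fun x hx y hy hxy => ?_⟩
      exact absurd ⟨(x, y), Finset.mem_filter.mpr ⟨Finset.mem_product.mpr ⟨hx, hy⟩, hxy⟩⟩ hT
  obtain ⟨n, hn⟩ := exists_nat_gt (max ((F.card : ℝ) ^ 2) (1 / δ))
  have hcard2 : ((F.card : ℝ)) ^ 2 < n := lt_of_le_of_lt (le_max_left _ _) hn
  have hδn : 1 / δ < n := lt_of_le_of_lt (le_max_right _ _) hn
  have hn0R : (0 : ℝ) < n := lt_of_le_of_lt (by positivity) hcard2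
  have hn0 : 0 < n := by exact_mod_cast hn0R
  have hinv : 1 / (n : ℝ) < δ := by
    rw [div_lt_iff₀ hn0R]
    calc (1:ℝ) = (1/δ) * δ := by field_simp
    _ < n * δ := by exact mul_lt_mul_of_pos_right hδn hδ0
    _ = δ * n := mul_comm _ _
  refine ⟨n, hn0, ⋃ i ∈ G.image (fun x : ℝ => ⌊x * (n:ℝ)⌋₊),
    Set.Icc ((i : ℝ) / n) (((i : ℝ) + 1) / n), ⟨G.image (fun x : ℝ => ⌊x * (n:ℝ)⌋₊), ?_, ?_, rfl⟩, ?_⟩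
  · -- subset of range n
    intro i hi
    simp only [Finset.mem_image] at hi
    obtain ⟨x, hxG, rfl⟩ := hi
    have hx := hF (hG hxG)
    rw [Finset.mem_range, Nat.floor_lt (mul_nonneg hx.1.le hn0R.le)]
    calc x * n < 1 * n := by exact mul_lt_mul_of_pos_right hx.2 hn0R
    _ = n := one_mul _
  · -- cardinality
    have h1 : ((G.image (fun x : ℝ => ⌊x * (n:ℝ)⌋₊)).card : ℝ) ≤ F.card := by
      exact_mod_cast le_trans (Finset.card_image_le) (Finset.card_le_card hG)
    refine lt_of_le_of_lt h1 ?_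
    rw [show ((n:ℕ):ℝ) = ((n:ℝ)) from rfl, ← Real.sqrt_sq (by positivity : (0:ℝ) ≤ (F.card:ℝ))]
    exact Real.sqrt_lt_sqrt (by positivity) hcard2
  · -- intersection
    have hmem : ∀ x ∈ G, x ∈ Set.Icc ((⌊x * n⌋₊ : ℝ) / n) ((⌊x * n⌋₊ + 1 : ℝ) / n) := by
      intro x hxG
      have hx := hF (hG hxG)
      constructor
      · rw [div_le_iff₀ hn0R]
        exact Nat.floor_le (mul_nonneg hx.1.le hn0R.le)
      · rw [le_div_iff₀ hn0R]
        exact (Nat.lt_floor_add_one (x * n)).le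
    ext y
    simp only [Set.mem_inter_iff, Set.mem_iUnion, Finset.mem_coe, Finset.mem_image,
      exists_prop]
    constructor
    · rintro ⟨⟨i, ⟨x, hxG, rfl⟩, hyI⟩, hyF⟩
      have hxI := hmem x hxG
      by_contra hyG
      have hxy : y ≠ x := fun h => hyG (h ▸ hxG)
      have h1 : |y - x| ≤ 1 / n := by
        rw [abs_sub_le_iff]
        constructor
        · linarith [hyI.2, hxI.1, hyI.1, hxI.2,
            (by field_simp; ring : ((⌊x*n⌋₊:ℝ)+1)/n - (⌊x*n⌋₊:ℝ)/n = 1/n)]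
        · linarith [hyI.1, hxI.2,
            (by field_simp; ring : ((⌊x*n⌋₊:ℝ)+1)/n - (⌊x*n⌋₊:ℝ)/n = 1/n)]
      have := hδ y hyF x (hG hxG) hxy
      linarith
    · intro hyG
      exact ⟨⟨⌊y * n⌋₊, ⟨y, hyG, rfl⟩, hmem y hyG⟩, hG hyG⟩
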